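/- Let A be a finite nonempty set of positive integers. For all n, d, e ∈ ℕ: if d ≥ fI(n) and e < fII(n), then W_A^$(n;d,e) = I. -/

import Mathlib

/-- Standard NIM winner for the one-pile subtraction game with move set `A`:
`nimW A n = true` means Player I (the player to move) wins with `n` stones;
`nimW A n = false` means Player II wins.  (For `A` consisting of positive
integers this is exactly: Player I wins iff some `a ∈ A` with `a ≤ n` moves to
a Player-II-win position `n - a`.) -/
def nimW (A : Finset ℕ) : ℕ → Bool
  | n =>
    decide (((A.filter fun a => 0 < a ∧ a ≤ n).attach.filter (fun a =>
      nimW A (n - a.1) = false)).Nonempty)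
decreasing_by
  all_goals
    have h := a.2
    simp only [Finset.mem_filter] at h
    omega

/-- NIM-with-cash winner: `nimWC A n d e = true` means the player to move,
having `d` dollars while the opponent has `e` dollars, wins with `n` stones
on the board.  The player to move wins iff there is `a ∈ A` with `a ≤ n`
and `a ≤ d` such that the resulting position `(n - a; e, d - a)` is a loss
for the (new) player to move. -/
def nimWC (A : Finset ℕ) : ℕ → ℕ → ℕ → Bool
  | n, d, e =>
    decide (((A.filter fun a => 0 < a ∧ a ≤ n ∧ a ≤ d).attach.filter (fun a =>
      nimWC A (n - a.1) e (d - a.1) = false)).Nonempty)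
decreasing_by
  all_goals
    have h := a.2
    simp only [Finset.mem_filter] at h
    omega

/-- `fpair A n = (fI A n, fII A n)`, defined by simultaneous recursion:
for `n < min A` both are `0`; otherwise `fII n = max { fI (n-a) : a ∈ A, a ≤ n }`
(so in particular `fII n = 0` when there is no legal move), and
`fI n = min { fII (n-a) + a : a ∈ A, a ≤ n, nimW A (n-a) = false }` if `nimW A n`,
while `fI n = min { fII (n-a) + a : a ∈ A, a ≤ n, fI (n-a) = fII n }` otherwise. -/
def fpair (A : Finset ℕ) : ℕ → ℕ × ℕ
  | n =>
    let opts := (A.filter fun a => 0 < a ∧ a ≤ n).attach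
    let fIIn := (opts.image fun a => (fpair A (n - a.1)).1).max.unbotD 0
    (if nimW A n then
        ((opts.filter fun a => nimW A (n - a.1) = false).image
          fun a => (fpair A (n - a.1)).2 + a.1).min.untopD 0
      else
        ((opts.filter fun a => (fpair A (n - a.1)).1 = fIIn).image
          fun a => (fpair A (n - a.1)).2 + a.1).min.untopD 0,
     fIIn)
decreasing_by
  all_goals
    have h := a.2
    simp only [Finset.mem_filter] at h
    omega

/-- `fI A n`: the least amount of money the player to move needs to win
(richness threshold for Player I), as defined in the paper. -/
def fI (A : Finset ℕ) (n : ℕ) : ℕ := (fpair A n).1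

/-- `fII A n`: the richness threshold for the player not moving (Player II). -/
def fII (A : Finset ℕ) (n : ℕ) : ℕ := (fpair A n).2

/-- If the player to move has at least `fI n` dollars and the
opponent has fewer than `fII n` dollars, the player to move wins NIM with cash. -/
private lemma myLe_max_unbot' {s : Finset ℕ} {b : ℕ} (hb : b ∈ s) : b ≤ s.max.unbotD 0 := by
  have h2 := Finset.le_max hb
  cases h : s.max with
  | bot => rw [h] at h2; simp at h2
  | coe m => rw [h] at h2; exact_mod_cast h2

private lemma myMax_unbot'_mem {s : Finset ℕ} (hs : s.Nonempty) : s.max.unbotD 0 ∈ s := by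
  obtain ⟨m, hm⟩ := Finset.max_of_nonempty hs
  rw [hm]; exact Finset.mem_of_max hm

private lemma myMin_untop'_le {s : Finset ℕ} {b : ℕ} (hb : b ∈ s) : s.min.untopD 0 ≤ b := by
  have h2 := Finset.min_le hb
  cases h : s.min with
  | top => rw [Finset.min_eq_top] at h; simp [h] at hb
  | coe m => rw [h] at h2; exact_mod_cast h2

private lemma myMin_untop'_mem {s : Finset ℕ} (hs : s.Nonempty) : s.min.untopD 0 ∈ s := by
  obtain ⟨m, hm⟩ := Finset.min_of_nonempty hs
  rw [hm]; exact Finset.mem_of_min hm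

private lemma nimW_iff (A : Finset ℕ) (n : ℕ) :
    nimW A n = true ↔ ∃ a ∈ A, 0 < a ∧ a ≤ n ∧ nimW A (n - a) = false := by
  rw [nimW]
  simp [Finset.filter_nonempty_iff, Finset.mem_filter]
  tauto

private lemma nimWC_iff (A : Finset ℕ) (n d e : ℕ) :
    nimWC A n d e = true ↔
    ∃ a ∈ A, 0 < a ∧ a ≤ n ∧ a ≤ d ∧ nimWC A (n - a) e (d - a) = false := by
  rw [nimWC]
  simp [Finset.filter_nonempty_iff, Finset.mem_filter]
  tauto

private lemma fII_def (A : Finset ℕ) (n : ℕ) : fII A n =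
    (((A.filter fun a => 0 < a ∧ a ≤ n).attach.image fun a => fI A (n - a.1)).max.unbotD 0) := by
  rw [fII, fpair]; rfl

private lemma fI_def_true (A : Finset ℕ) (n : ℕ) (h : nimW A n = true) : fI A n =
    ((((A.filter fun a => 0 < a ∧ a ≤ n).attach.filter fun a => nimW A (n - a.1) = false).image
      fun a => fII A (n - a.1) + a.1).min.untopD 0) := by
  rw [fI, fpair]; simp only [h, if_true]; rfl

private lemma fI_def_false (A : Finset ℕ) (n : ℕ) (h : nimW A n = false) : fI A n =
    ((((A.filter fun a => 0 < a ∧ a ≤ n).attach.filter fun a => fI A (n - a.1) = fII A n).image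
      fun a => fII A (n - a.1) + a.1).min.untopD 0) := by
  rw [fI, fII, fpair]; simp only [h, Bool.false_eq_true, if_false]; rfl

private lemma le_fII (A : Finset ℕ) {n a : ℕ} (ha : a ∈ A) (h0 : 0 < a) (hn : a ≤ n) :
    fI A (n - a) ≤ fII A n := by
  rw [fII_def]
  exact myLe_max_unbot' (Finset.mem_image.mpr
    ⟨⟨a, Finset.mem_filter.mpr ⟨ha, h0, hn⟩⟩, Finset.mem_attach _ _, rfl⟩)

private lemma legal_of_fII_ne (A : Finset ℕ) {n : ℕ} (h : fII A n ≠ 0) :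
    ∃ a ∈ A, 0 < a ∧ a ≤ n := by
  by_contra hc
  push_neg at hc
  apply h
  rw [fII_def]
  have he : A.filter (fun a => 0 < a ∧ a ≤ n) = ∅ := by
    rw [Finset.filter_eq_empty_iff]
    intro a ha ⟨h1, h2⟩
    exact absurd h2 (not_le.mpr (hc a ha h1))
  rw [he]
  simp

private lemma fII_attained (A : Finset ℕ) {n : ℕ} (hl : ∃ a ∈ A, 0 < a ∧ a ≤ n) :
    ∃ a ∈ A, 0 < a ∧ a ≤ n ∧ fI A (n - a) = fII A n := by
  obtain ⟨a0, ha0, h00, hn0⟩ := hl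
  have hne : ((A.filter fun a => 0 < a ∧ a ≤ n).attach.image fun a => fI A (n - a.1)).Nonempty :=
    ⟨fI A (n - a0), Finset.mem_image.mpr
      ⟨⟨a0, Finset.mem_filter.mpr ⟨ha0, h00, hn0⟩⟩, Finset.mem_attach _ _, rfl⟩⟩
  have hmem := myMax_unbot'_mem hne
  rw [← fII_def] at hmem
  obtain ⟨⟨a, ha⟩, _, heq⟩ := Finset.mem_image.mp hmem
  obtain ⟨haA, h0, hn⟩ := Finset.mem_filter.mp ha
  exact ⟨a, haA, h0, hn, heq⟩

private lemma fI_spec_true (A : Finset ℕ) {n : ℕ} (h : nimW A n = true) :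
    ∃ a ∈ A, 0 < a ∧ a ≤ n ∧ nimW A (n - a) = false ∧ fII A (n - a) + a = fI A n := by
  obtain ⟨a0, ha0, h00, hn0, hw0⟩ := (nimW_iff A n).mp h
  have hne : ((((A.filter fun a => 0 < a ∧ a ≤ n).attach.filter
      fun a => nimW A (n - a.1) = false).image
      fun a => fII A (n - a.1) + a.1)).Nonempty :=
    ⟨fII A (n - a0) + a0, Finset.mem_image.mpr
      ⟨⟨a0, Finset.mem_filter.mpr ⟨ha0, h00, hn0⟩⟩,
        Finset.mem_filter.mpr ⟨Finset.mem_attach _ _, hw0⟩, rfl⟩⟩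
  have hmem := myMin_untop'_mem hne
  rw [← fI_def_true A n h] at hmem
  obtain ⟨⟨a, ha⟩, hmem2, heq⟩ := Finset.mem_image.mp hmem
  obtain ⟨_, hw⟩ := Finset.mem_filter.mp hmem2
  obtain ⟨haA, h0, hn⟩ := Finset.mem_filter.mp ha
  exact ⟨a, haA, h0, hn, hw, heq⟩

private lemma fI_spec_false (A : Finset ℕ) {n : ℕ} (h : nimW A n = false)
    (hl : ∃ a ∈ A, 0 < a ∧ a ≤ n) :
    ∃ a ∈ A, 0 < a ∧ a ≤ n ∧ fI A (n - a) = fII A n ∧ fII A (n - a) + a = fI A n := by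
  obtain ⟨a0, ha0, h00, hn0, hf0⟩ := fII_attained A hl
  have hne : ((((A.filter fun a => 0 < a ∧ a ≤ n).attach.filter
      fun a => fI A (n - a.1) = fII A n).image
      fun a => fII A (n - a.1) + a.1)).Nonempty :=
    ⟨fII A (n - a0) + a0, Finset.mem_image.mpr
      ⟨⟨a0, Finset.mem_filter.mpr ⟨ha0, h00, hn0⟩⟩,
        Finset.mem_filter.mpr ⟨Finset.mem_attach _ _, hf0⟩, rfl⟩⟩
  have hmem := myMin_untop'_mem hne
  rw [← fI_def_false A n h] at hmem
  obtain ⟨⟨a, ha⟩, hmem2, heq⟩ := Finset.mem_image.mp hmem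
  obtain ⟨_, hf⟩ := Finset.mem_filter.mp hmem2
  obtain ⟨haA, h0, hn⟩ := Finset.mem_filter.mp ha
  exact ⟨a, haA, h0, hn, hf, heq⟩

private lemma fI_le (A : Finset ℕ) {n a : ℕ} (h : nimW A n = true) (ha : a ∈ A)
    (h0 : 0 < a) (hn : a ≤ n) (hw : nimW A (n - a) = false) :
    fI A n ≤ fII A (n - a) + a := by
  rw [fI_def_true A n h]
  exact myMin_untop'_le (Finset.mem_image.mpr
    ⟨⟨a, Finset.mem_filter.mpr ⟨ha, h0, hn⟩⟩,
      Finset.mem_filter.mpr ⟨Finset.mem_attach _ _, hw⟩, rfl⟩)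

private lemma main_lemma (A : Finset ℕ) : ∀ n d e : ℕ,
    (nimW A n = true → fI A n ≤ d → nimWC A n d e = true) ∧
    (nimW A n = false → fII A n ≤ e → nimWC A n d e = false) ∧
    (fI A n ≤ d → e < fII A n → nimWC A n d e = true) ∧
    (d < fI A n → fII A n ≤ e → nimWC A n d e = false) := by
  intro n
  induction n using Nat.strong_induction_on with
  | _ n IH =>
  have P1 : ∀ d e, nimW A n = true → fI A n ≤ d → nimWC A n d e = true := by
    intro d e hW hd
    obtain ⟨a, haA, h0, hn, hw, heq⟩ := fI_spec_true A hW
    rw [nimWC_iff]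
    refine ⟨a, haA, h0, hn, by omega, ?_⟩
    exact ((IH (n - a) (by omega) e (d - a)).2.1) hw (by omega)
  have P2 : ∀ d e, nimW A n = false → fII A n ≤ e → nimWC A n d e = false := by
    intro d e hW he
    rw [Bool.eq_false_iff]
    intro hc
    obtain ⟨a, haA, h0, hn, hdle, hfalse⟩ := (nimWC_iff A n d e).mp hc
    have hW' : nimW A (n - a) = true := by
      cases hw : nimW A (n - a) with
      | false => exact absurd ((nimW_iff A n).mpr ⟨a, haA, h0, hn, hw⟩) (by simp [hW])
      | true => rfl
    have hfi : fI A (n - a) ≤ e := le_trans (le_fII A haA h0 hn) he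
    have := ((IH (n - a) (by omega) e (d - a)).1) hW' hfi
    rw [this] at hfalse
    exact absurd hfalse (by simp)
  have P3 : ∀ d e, fI A n ≤ d → e < fII A n → nimWC A n d e = true := by
    intro d e hd he
    cases hW : nimW A n with
    | true => exact P1 d e hW hd
    | false =>
      have hl : ∃ a ∈ A, 0 < a ∧ a ≤ n := legal_of_fII_ne A (by omega)
      obtain ⟨a, haA, h0, hn, hf, heq⟩ := fI_spec_false A hW hl
      rw [nimWC_iff]
      refine ⟨a, haA, h0, hn, by omega, ?_⟩
      exact ((IH (n - a) (by omega) e (d - a)).2.2.2) (by omega) (by omega)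
  have P4 : ∀ d e, d < fI A n → fII A n ≤ e → nimWC A n d e = false := by
    intro d e hd he
    rw [Bool.eq_false_iff]
    intro hc
    obtain ⟨a, haA, h0, hn, hdle, hfalse⟩ := (nimWC_iff A n d e).mp hc
    have hfi : fI A (n - a) ≤ e := le_trans (le_fII A haA h0 hn) he
    cases hW' : nimW A (n - a) with
    | true =>
      have := ((IH (n - a) (by omega) e (d - a)).1) hW' hfi
      rw [this] at hfalse
      exact absurd hfalse (by simp)
    | false =>
      have hWn : nimW A n = true := (nimW_iff A n).mpr ⟨a, haA, h0, hn, hW'⟩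
      have hle := fI_le A hWn haA h0 hn hW'
      have := ((IH (n - a) (by omega) e (d - a)).2.2.1) hfi (by omega)
      rw [this] at hfalse
      exact absurd hfalse (by simp)
  exact fun d e => ⟨P1 d e, P2 d e, P3 d e, P4 d e⟩

/-- If the player to move has at least `fI n` dollars and the
opponent has fewer than `fII n` dollars, the player to move wins NIM with cash. -/
theorem nimWC_rich_I (A : Finset ℕ) (hA : A.Nonempty) (hpos : ∀ a ∈ A, 0 < a)
    (n d e : ℕ) (hd : fI A n ≤ d) (he : e < fII A n) :
    nimWC A n d e = true :=
  (main_lemma A n d e).2.2.1 hd he
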